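/- Let z be a compact operator on H with z* = −z, p_i z p_i = 0 for every i ≥ 1, and p_0 z p_0 = 0. Then for every ε > 0 there exists a compact operator y with ‖y‖ ≤ 1 such that ‖z·P(y) − P(z·y)‖ ≥ (1/2)‖z‖ − ε. -/

import Mathlib

set_option maxHeartbeats 1000000

section AuxiliaryLemmas

variable {H : Type*} [NormedAddCommGroup H] [InnerProductSpace ℂ H]

local notation "⟪" x ", " y "⟫" => @inner ℂ _ _ x y

lemma aux_contr (q : H →L[ℂ] H) (hsym : ∀ a b : H, ⟪q a, b⟫ = ⟪a, q b⟫)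
    (hq : ∀ a, q (q a) = q a) (w : H) : ‖q w‖ ≤ ‖w‖ := by
  have h1 : (‖q w‖ : ℝ) ^ 2 = RCLike.re ⟪q w, q w⟫ := (inner_self_eq_norm_sq (𝕜 := ℂ) _).symm
  rw [hsym, hq] at h1
  have h3 : RCLike.re ⟪w, q w⟫ ≤ ‖w‖ * ‖q w‖ :=
    le_trans (RCLike.re_le_norm _) (norm_inner_le_norm _ _)
  nlinarith [norm_nonneg (q w), norm_nonneg w]

lemma aux_sumsq (u : ℕ → H) (F : Finset ℕ)
    (h : ∀ i ∈ F, ∀ j ∈ F, i ≠ j → ⟪u i, u j⟫ = 0) :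
    ‖∑ i ∈ F, u i‖ ^ 2 = ∑ i ∈ F, ‖u i‖ ^ 2 := by
  have key : ⟪∑ i ∈ F, u i, ∑ i ∈ F, u i⟫ = ∑ i ∈ F, ⟪u i, u i⟫ := by
    rw [sum_inner]
    refine Finset.sum_congr rfl fun i hi => ?_
    rw [inner_sum, Finset.sum_eq_single_of_mem i hi (fun j hj hji => h i hi j hj (Ne.symm hji))]
  simp only [inner_self_eq_norm_sq_to_K] at key
  exact_mod_cast key

end AuxiliaryLemmas

local notation "⟪" x ", " y "⟫" => @inner ℂ _ _ x y


/-- The pinching operator associated with a family of mutually orthogonal projections. -/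
noncomputable def pinch {H : Type*} [NormedAddCommGroup H] [InnerProductSpace ℂ H]
    (p : ℕ → H →L[ℂ] H) (x : H →L[ℂ] H) : H →L[ℂ] H :=
  ∑' i, p i * x * p i

/-- Let `z` be a compact skew-adjoint operator with `p i * z * p i = 0` for all
`i` and `p0 * z * p0 = 0`. Then for every `ε > 0` there is a compact `y` with `‖y‖ ≤ 1` and
`‖z * P y - P (z * y)‖ ≥ ‖z‖ / 2 - ε`. -/
theorem pinching_commutator_lower_bound_skew
    {H : Type*} [NormedAddCommGroup H] [InnerProductSpace ℂ H] [CompleteSpace H]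
    [TopologicalSpace.SeparableSpace H]
    (hinf : ¬ FiniteDimensional ℂ H)
    (p : ℕ → H →L[ℂ] H)
    (hsa : ∀ i, IsSelfAdjoint (p i))
    (hidem : ∀ i, p i * p i = p i)
    (horth : ∀ i j, i ≠ j → p i * p j = 0)
    (p0 : H →L[ℂ] H) (hp0sa : IsSelfAdjoint p0) (hp0idem : p0 * p0 = p0)
    (hp0fix : ∀ ξ : H, p0 ξ = ξ ↔ ∀ i, p i ξ = 0)
    (z : H →L[ℂ] H) (hz : IsCompactOperator ⇑z) (hzsk : star z = -z)
    (hdiag : ∀ i, p i * z * p i = 0) (hdiag0 : p0 * z * p0 = 0) :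
    ∀ ε > (0 : ℝ), ∃ y : H →L[ℂ] H, IsCompactOperator ⇑y ∧ ‖y‖ ≤ 1 ∧
      ‖z‖ / 2 - ε ≤ ‖z * pinch p y - pinch p (z * y)‖ := by
  intro ε hε
  by_cases hz0 : z = 0
  · refine ⟨0, isCompactOperator_zero, by simp, ?_⟩
    have h1 : ‖z‖ = 0 := by simp [hz0]
    have h2 : ‖z‖ / 2 - ε ≤ 0 := by rw [h1]; linarith
    exact le_trans h2 (norm_nonneg _)
  classical
  -- pointwise versions of the algebraic hypotheses
  have hpsym : ∀ i (a b : H), ⟪(p i) a, b⟫ = ⟪a, (p i) b⟫ := fun i a b => (hsa i).isSymmetric a b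
  have hp0sym : ∀ a b : H, ⟪p0 a, b⟫ = ⟪a, p0 b⟫ := fun a b => hp0sa.isSymmetric a b
  have hpidem' : ∀ i a, p i (p i a) = p i a := by
    intro i a
    calc p i (p i a) = (p i * p i) a := rfl
    _ = p i a := by rw [hidem i]
  have hp0idem' : ∀ a, p0 (p0 a) = p0 a := by
    intro a
    calc p0 (p0 a) = (p0 * p0) a := rfl
    _ = p0 a := by rw [hp0idem]
  have horth' : ∀ i j, i ≠ j → ∀ a, p i (p j a) = 0 := by
    intro i j hij a
    calc p i (p j a) = (p i * p j) a := rfl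
    _ = 0 := by rw [horth i j hij]; rfl
  have hpp0 : ∀ i, p i * p0 = 0 := by
    intro i; ext w
    have h1 : p0 (p0 w) = p0 w := hp0idem' w
    have := (hp0fix (p0 w)).mp h1 i
    simpa using this
  have hp0p : ∀ i, p0 * p i = 0 := by
    intro i
    have h := congrArg star (hpp0 i)
    rwa [star_mul, (hsa i).star_eq, hp0sa.star_eq, star_zero] at h
  -- Step A
  set c := ‖z * (1 - p0)‖ with hc
  have hp0contr : ∀ w : H, ‖p0 w‖ ≤ ‖w‖ := fun w => aux_contr p0 hp0sym hp0idem' w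
  have hp0n : ‖p0‖ ≤ 1 := ContinuousLinearMap.opNorm_le_bound _ zero_le_one
    (fun w => by simpa using hp0contr w)
  have hzp0 : ‖z * p0‖ ≤ c := by
    have e0 : star (z * p0) = -(p0 * z) := by
      rw [star_mul, hp0sa.star_eq, hzsk, mul_neg]
    have e1 : ‖z * p0‖ = ‖p0 * z‖ := by
      calc ‖z * p0‖ = ‖star (z * p0)‖ := (norm_star _).symm
      _ = ‖-(p0 * z)‖ := by rw [e0]
      _ = ‖p0 * z‖ := norm_neg _
    have e2 : p0 * z = p0 * (z * (1 - p0)) := by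
      have : p0 * (z * (1 - p0)) = p0 * z - p0 * z * p0 := by noncomm_ring
      rw [this, hdiag0, sub_zero]
    rw [e1, e2]
    calc ‖p0 * (z * (1 - p0))‖ ≤ ‖p0‖ * ‖z * (1 - p0)‖ := norm_mul_le _ _
    _ ≤ 1 * c := by rw [← hc]; exact mul_le_mul_of_nonneg_right hp0n (norm_nonneg _)
    _ = c := one_mul c
  have hcz : ‖z‖ ≤ 2 * c := by
    have hzz : z = z * (1 - p0) + z * p0 := by noncomm_ring
    calc ‖z‖ = ‖z * (1 - p0) + z * p0‖ := by rw [← hzz]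
    _ ≤ ‖z * (1 - p0)‖ + ‖z * p0‖ := norm_add_le _ _
    _ ≤ c + c := by rw [← hc]; exact add_le_add le_rfl hzp0
    _ = 2 * c := by ring
  have hcpos : 0 < c := by
    rcases lt_or_eq_of_le (norm_nonneg (z * (1 - p0))) with h | h
    · exact h
    · exfalso
      have : ‖z‖ ≤ 0 := by rw [hc] at *; linarith [hcz, h]
      exact hz0 (norm_le_zero_iff.mp this)
  set ε' := min (ε / 2) (c / 2) with hε'
  have hε'pos : 0 < ε' := lt_min (by linarith) (by linarith)
  obtain ⟨u₀, hu₀, hu₀'⟩ := ContinuousLinearMap.exists_lt_apply_of_lt_opNorm (z * (1 - p0))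
    (show c - ε' < ‖z * (1 - p0)‖ by rw [← hc]; linarith)
  set η := (1 - p0) u₀ with hη
  have hzη : c - ε' < ‖z η‖ := hu₀'
  have hηne : η ≠ 0 := by
    intro h
    rw [h] at hzη
    simp only [map_zero, norm_zero] at hzη
    have : ε' ≤ c / 2 := min_le_right _ _
    linarith
  have hqsym : ∀ a b : H, ⟪(1 - p0) a, b⟫ = ⟪a, (1 - p0) b⟫ := by
    intro a b
    simp only [ContinuousLinearMap.sub_apply, ContinuousLinearMap.one_apply, inner_sub_left,
      inner_sub_right, hp0sym]
  have hqidem : ∀ a : H, (1 - p0) ((1 - p0) a) = (1 - p0) a := by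
    intro a
    simp only [ContinuousLinearMap.sub_apply, ContinuousLinearMap.one_apply, map_sub, hp0idem']
    abel
  have hη1 : ‖η‖ ≤ 1 := le_trans (aux_contr (1 - p0) hqsym hqidem u₀) hu₀.le
  set ζ := ‖η‖⁻¹ • η with hζ
  have hζ1 : ‖ζ‖ = 1 := norm_smul_inv_norm hηne
  have hp0η : p0 η = 0 := by
    rw [hη]
    simp only [ContinuousLinearMap.sub_apply, ContinuousLinearMap.one_apply, map_sub, hp0idem']
    abel
  have hp0ζ : p0 ζ = 0 := by rw [hζ, ContinuousLinearMap.map_smul_of_tower, hp0η, smul_zero]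
  have hzζ : ‖z‖ / 2 - ε / 2 ≤ ‖z ζ‖ := by
    have hηζ : η = ‖η‖ • ζ := by
      rw [hζ, smul_smul, mul_inv_cancel₀ (norm_ne_zero_iff.mpr hηne), one_smul]
    have h1 : ‖z η‖ ≤ ‖z ζ‖ := by
      rw [hηζ, ContinuousLinearMap.map_smul_of_tower, norm_smul, norm_norm]
      exact mul_le_of_le_one_left (norm_nonneg _) hη1
    have h2 : ε' ≤ ε / 2 := min_le_left _ _
    linarith
  -- Step B : summability of the block components of ζ
  set u : ℕ → H := fun i => p i ζ with hu
  have horthvec : ∀ i j, i ≠ j → ⟪u i, u j⟫ = 0 := by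
    intro i j hij
    calc ⟪p i ζ, p j ζ⟫ = ⟪ζ, p i (p j ζ)⟫ := hpsym i _ _
    _ = 0 := by rw [horth' i j hij, inner_zero_right]
  have hsumF : ∀ F : Finset ℕ, ∑ i ∈ F, ‖u i‖ ^ 2 ≤ 1 := by
    intro F
    rw [← aux_sumsq u F (fun i _ j _ hij => horthvec i j hij)]
    have hQsym : ∀ a b : H, ⟪(∑ i ∈ F, p i) a, b⟫ = ⟪a, (∑ i ∈ F, p i) b⟫ := by
      intro a b
      simp only [ContinuousLinearMap.sum_apply, sum_inner, inner_sum]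
      exact Finset.sum_congr rfl fun i _ => hpsym i a b
    have hQidem : ∀ a : H, (∑ i ∈ F, p i) ((∑ i ∈ F, p i) a) = (∑ i ∈ F, p i) a := by
      intro a
      simp only [ContinuousLinearMap.sum_apply, map_sum]
      rw [Finset.sum_comm]
      refine Finset.sum_congr rfl fun i hi => ?_
      rw [Finset.sum_eq_single_of_mem i hi (fun j _ hji => horth' i j (fun h => hji h.symm) a)]
      exact hpidem' i a
    have h1 : ∑ i ∈ F, u i = (∑ i ∈ F, p i) ζ := by
      simp [ContinuousLinearMap.sum_apply, hu]
    rw [h1]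
    have h2 : ‖(∑ i ∈ F, p i) ζ‖ ≤ 1 := by
      rw [← hζ1]; exact aux_contr _ hQsym hQidem ζ
    nlinarith [norm_nonneg ((∑ i ∈ F, p i) ζ), h2]
  have hsummsq : Summable (fun i => ‖u i‖ ^ 2) :=
    summable_of_sum_le (fun i => sq_nonneg _) hsumF
  have hsummu : Summable u := by
    rw [summable_iff_vanishing_norm]
    intro δ hδ
    obtain ⟨s, hs⟩ := summable_iff_vanishing_norm.mp hsummsq (δ ^ 2) (by positivity)
    refine ⟨s, fun t ht => ?_⟩
    have h1 : ‖∑ i ∈ t, u i‖ ^ 2 = ∑ i ∈ t, ‖u i‖ ^ 2 :=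
      aux_sumsq u t (fun i _ j _ hij => horthvec i j hij)
    have h2 := hs t ht
    have h3 : ∑ i ∈ t, ‖u i‖ ^ 2 < δ ^ 2 :=
      lt_of_le_of_lt (le_abs_self _) (by simpa [Real.norm_eq_abs] using h2)
    nlinarith [norm_nonneg (∑ i ∈ t, u i)]
  obtain ⟨w, hw⟩ := hsummu
  have hpw : ∀ j, p j w = u j := by
    intro j
    have h1 : HasSum (fun i => p j (u i)) (p j w) := hw.mapL (p j)
    have h2 : (fun i => p j (u i)) = fun i => if i = j then u j else 0 := by
      funext i
      by_cases hij : i = j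
      · subst hij; simp only [if_pos rfl, hu]; exact hpidem' i ζ
      · simp only [if_neg hij, hu]; exact horth' j i (fun h => hij h.symm) ζ
    rw [h2] at h1
    exact h1.unique (hasSum_ite_eq j (u j))
  have hp0w : p0 w = 0 := by
    have h1 : HasSum (fun i => p0 (u i)) (p0 w) := hw.mapL p0
    have h2 : (fun i => p0 (u i)) = fun _ => (0 : H) := by
      funext i
      calc p0 (u i) = (p0 * p i) ζ := rfl
      _ = 0 := by rw [hp0p i]; rfl
    rw [h2] at h1
    exact h1.unique hasSum_zero
  have hwζ : w = ζ := by
    have h1 : p0 (ζ - w) = ζ - w :=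
      (hp0fix (ζ - w)).mpr (fun i => by rw [map_sub, hpw i]; simp [hu])
    have h2 : p0 (ζ - w) = 0 := by rw [map_sub, hp0ζ, hp0w, sub_zero]
    have h3 : ζ - w = 0 := by rw [← h1, h2]
    exact (sub_eq_zero.mp h3).symm
  rw [hwζ] at hw
  -- choose a truncation level N
  set δ₀ := ε / (2 * (‖z‖ + 1)) with hδ₀
  have hδ₀pos : 0 < δ₀ := by
    rw [hδ₀]
    have : (0:ℝ) < 2 * (‖z‖ + 1) := by positivity
    exact div_pos hε this
  obtain ⟨N, hN⟩ := Metric.tendsto_atTop.mp hw.tendsto_sum_nat δ₀ hδ₀pos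
  have hNd : ‖(∑ i ∈ Finset.range N, u i) - ζ‖ < δ₀ := by
    simpa [dist_eq_norm] using hN N le_rfl
  -- the finite-rank block-diagonal operator y
  set e : ℕ → H := fun i => ((‖u i‖ : ℂ))⁻¹ • u i with he
  have hpe : ∀ j i, p j (e i) = if j = i then e i else 0 := by
    intro j i
    by_cases h : j = i
    · subst h
      rw [if_pos rfl, he]
      simp only [map_smul]
      congr 1
      exact hpidem' j ζ
    · rw [if_neg h, he]
      simp only [map_smul]
      rw [show (p j) (u i) = 0 from horth' j i h ζ, smul_zero]
  set r : ℕ → H →L[ℂ] H := fun i => (innerSL ℂ (e i)).smulRight (e i) with hr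
  have hrapp : ∀ i v, r i v = ⟪e i, v⟫ • e i := fun i v => rfl
  set y : H →L[ℂ] H := ∑ i ∈ Finset.range N, r i with hy
  -- compactness
  have hrcompact : ∀ i, IsCompactOperator ⇑(r i) := by
    intro i
    have h1 : IsCompactOperator ⇑(innerSL ℂ (e i)) := by
      refine ⟨Metric.closedBall 0 1, isCompact_closedBall _ _, ?_⟩
      have hc := (innerSL ℂ (e i)).continuous.tendsto 0
      have hb : Metric.closedBall (0:ℂ) 1 ∈ nhds ((innerSL ℂ (e i)) 0) := by
        rw [map_zero]
        exact Metric.closedBall_mem_nhds (0:ℂ) one_pos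
      exact hc hb
    have h2 := h1.clm_comp (ContinuousLinearMap.toSpanSingleton ℂ (e i))
    have h3 : ⇑(r i) = ⇑(ContinuousLinearMap.toSpanSingleton ℂ (e i)) ∘ ⇑(innerSL ℂ (e i)) := by
      funext v
      simp [hrapp, ContinuousLinearMap.toSpanSingleton_apply]
    rw [h3]
    exact h2
  have hycompact : IsCompactOperator ⇑y := by
    have : ∀ F : Finset ℕ, IsCompactOperator ⇑(∑ i ∈ F, r i) := by
      intro F
      induction F using Finset.induction_on with
      | empty => simpa using (isCompactOperator_zero : IsCompactOperator (fun _ : H => (0:H)))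
      | insert a s hx ih =>
        rw [Finset.sum_insert hx]
        have : ⇑(r a + ∑ i ∈ s, r i) = ⇑(r a) + ⇑(∑ i ∈ s, r i) := rfl
        rw [this]
        exact (hrcompact a).add ih
    exact this _
  -- basic facts about e
  have hee : ∀ i j, i ≠ j → ⟪e i, e j⟫ = 0 := by
    intro i j hij
    rw [he]
    simp only [inner_smul_left, inner_smul_right, horthvec i j hij, mul_zero]
  have hcol : ∀ i (w' : H), ⟪e i, w'⟫ * ⟪e i, e i⟫ = ⟪e i, w'⟫ := by
    intro i w'
    by_cases h : u i = 0
    · have : e i = 0 := by rw [he]; simp [h]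
      simp [this]
    · have hn1 : ‖e i‖ = 1 := by
        rw [he, norm_smul]
        have hcast : ‖(((‖u i‖ : ℂ)))⁻¹‖ = ‖u i‖⁻¹ := by
          rw [norm_inv]
          simp
        rw [hcast]
        exact inv_mul_cancel₀ (norm_ne_zero_iff.mpr h)
      rw [inner_self_eq_norm_sq_to_K, hn1]
      simp
  -- norm bound for y
  have hyapp : ∀ v, y v = ∑ i ∈ Finset.range N, ⟪e i, v⟫ • e i := by
    intro v
    rw [hy, ContinuousLinearMap.sum_apply]
    exact Finset.sum_congr rfl fun i _ => hrapp i v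
  have hnormy : ‖y‖ ≤ 1 := by
    refine ContinuousLinearMap.opNorm_le_bound _ zero_le_one (fun v => ?_)
    rw [one_mul]
    have hey : ∀ i ∈ Finset.range N, ⟪e i, y v⟫ = ⟪e i, v⟫ := by
      intro i hi
      rw [hyapp, inner_sum]
      rw [Finset.sum_eq_single_of_mem i hi (fun j _ hji => by
        rw [inner_smul_right, hee i j (fun hh => hji hh.symm), mul_zero])]
      rw [inner_smul_right]
      exact hcol i v
    have hterm : ∀ w' : H, ⟪y v, w'⟫ =
        ∑ i ∈ Finset.range N, (starRingEnd ℂ) ⟪e i, v⟫ * ⟪e i, w'⟫ := by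
      intro w'
      rw [show y v = ∑ i ∈ Finset.range N, ⟪e i, v⟫ • e i from hyapp v, sum_inner]
      exact Finset.sum_congr rfl fun i _ => inner_smul_left _ _ _
    have hkey : ⟪y v, y v⟫ = ⟪y v, v⟫ := by
      rw [hterm (y v), hterm v]
      exact Finset.sum_congr rfl fun i hi => by rw [hey i hi]
    have h1 : (‖y v‖ : ℝ) ^ 2 = RCLike.re ⟪y v, y v⟫ := (inner_self_eq_norm_sq (𝕜 := ℂ) _).symm
    rw [hkey] at h1
    have h3 : RCLike.re ⟪y v, v⟫ ≤ ‖y v‖ * ‖v‖ :=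
      le_trans (RCLike.re_le_norm _) (norm_inner_le_norm _ _)
    nlinarith [norm_nonneg (y v), norm_nonneg v]
  -- structure of y with respect to the pinching
  have hyp : ∀ j, y * p j = if j < N then r j else 0 := by
    intro j
    ext v
    have h1 : (y * p j) v = ∑ i ∈ Finset.range N, ⟪e i, (p j) v⟫ • e i := by
      rw [ContinuousLinearMap.mul_apply, hyapp]
    have h2 : ∀ i, ⟪e i, (p j) v⟫ • e i = if i = j then r i v else 0 := by
      intro i
      rw [show ⟪e i, (p j) v⟫ = ⟪(p j) (e i), v⟫ from (hpsym j (e i) v).symm, hpe j i]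
      by_cases h : i = j
      · rw [if_pos h, if_pos h.symm, hrapp]
      · rw [if_neg h, if_neg (fun hh => h hh.symm), inner_zero_left, zero_smul]
    rw [h1]
    simp only [h2]
    rw [Finset.sum_ite_eq' (Finset.range N) j (fun i => r i v)]
    by_cases h : j < N
    · simp [Finset.mem_range, h]
    · simp [Finset.mem_range, h]
  have hpy : pinch p y = y := by
    have h1 : ∀ j, p j * y * p j = if j < N then r j else 0 := by
      intro j
      rw [mul_assoc, hyp j]
      by_cases h : j < N
      · rw [if_pos h]
        ext v
        rw [ContinuousLinearMap.mul_apply, hrapp, map_smul, hpe j j, if_pos rfl]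
      · rw [if_neg h, mul_zero]
    rw [pinch, tsum_congr h1, tsum_eq_sum (s := Finset.range N)
      (fun j hj => if_neg (by simpa using hj))]
    rw [hy]
    exact Finset.sum_congr rfl fun j hj => if_pos (Finset.mem_range.mp hj)
  have hpzy : pinch p (z * y) = 0 := by
    have h1 : ∀ j, p j * (z * y) * p j = 0 := by
      intro j
      have e1 : p j * (z * y) * p j = (p j * z) * (y * p j) := by noncomm_ring
      rw [e1, hyp j]
      by_cases h : j < N
      · rw [if_pos h]
        ext v
        rw [ContinuousLinearMap.mul_apply, hrapp, map_smul]
        have h2 : (p j * z) (e j) = 0 := by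
          have h3 : (p j * z) (e j) = ((‖u j‖ : ℂ))⁻¹ • ((p j * z * p j) ζ) := by
            rw [he]
            simp only [map_smul]
            rfl
          rw [h3, hdiag j]
          simp
        rw [h2, smul_zero, ContinuousLinearMap.zero_apply]
      · rw [if_neg h, mul_zero]
    rw [pinch, tsum_congr h1, tsum_zero]
  -- final estimate
  refine ⟨y, hycompact, hnormy, ?_⟩
  rw [hpy, hpzy, sub_zero]
  have hinnerζ : ∀ i, ⟪e i, ζ⟫ • e i = u i := by
    intro i
    by_cases h : u i = 0
    · have : e i = 0 := by rw [he]; simp [h]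
      rw [this, smul_zero, h]
    · have h1 : ⟪u i, ζ⟫ = ((‖u i‖ : ℂ)) ^ 2 := by
        calc ⟪(p i) ζ, ζ⟫ = ⟪(p i) ((p i) ζ), ζ⟫ := by rw [hpidem']
        _ = ⟪(p i) ζ, (p i) ζ⟫ := hpsym i _ _
        _ = ((‖u i‖ : ℂ)) ^ 2 := inner_self_eq_norm_sq_to_K _
      have h2 : ⟪e i, ζ⟫ = (‖u i‖ : ℂ) := by
        rw [he, inner_smul_left, h1, map_inv₀, Complex.conj_ofReal]
        have hne : ((‖u i‖ : ℂ)) ≠ 0 := by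
          simpa using norm_ne_zero_iff.mpr h
        field_simp
      rw [h2, he, smul_smul, mul_inv_cancel₀ (by simpa using norm_ne_zero_iff.mpr h), one_smul]
  have hyζ : y ζ = ∑ i ∈ Finset.range N, u i := by
    rw [hyapp]
    exact Finset.sum_congr rfl fun i _ => hinnerζ i
  have h1 : ‖(z * y) ζ‖ ≤ ‖z * y‖ := ContinuousLinearMap.unit_le_opNorm _ _ (le_of_eq hζ1)
  have h2 : (z * y) ζ = z (y ζ) := rfl
  have h3 : ‖z ζ - z (y ζ)‖ ≤ ‖z‖ * δ₀ := by
    rw [← map_sub]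
    calc ‖z (ζ - y ζ)‖ ≤ ‖z‖ * ‖ζ - y ζ‖ := ContinuousLinearMap.le_opNorm _ _
    _ ≤ ‖z‖ * δ₀ := by
        refine mul_le_mul_of_nonneg_left ?_ (norm_nonneg _)
        rw [hyζ, norm_sub_rev]
        exact hNd.le
  have h4 : ‖z‖ * δ₀ ≤ ε / 2 := by
    rw [hδ₀, mul_div_assoc']
    rw [div_le_div_iff₀ (by positivity) (by norm_num)]
    nlinarith [norm_nonneg z, hε.le]
  have h5 : ‖z ζ‖ - ‖z (y ζ)‖ ≤ ‖z ζ - z (y ζ)‖ := norm_sub_norm_le _ _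
  rw [h2] at h1
  linarith
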